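/- For a PS polynomial f with m nonlinear monomials of maximum degree d, the standard extension furnishes an exact set of linear overestimators of cardinality ∏_{α ∈ supp(f)} |α| ≤ d^m; hence the concave-extension complexity Γ of f is bounded by min(2^{n'}, d^m), where n' is the number of variables appearing in f. -/

import Mathlib

/-- Evaluation of a multilinear binary polynomial with coefficient vector `c`
(indexed by subsets of `Fin n`) at the binary point corresponding to `S`. -/
def evalPoly {n : ℕ} (c : Finset (Fin n) → ℝ) (S : Finset (Fin n)) : ℝ :=
  ∑ A : Finset (Fin n), if A ⊆ S then c A else 0

/-- For a PS polynomial with `m` nonlinear monomials of maximum degree `d` on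
`n'` variables, the standard extension provides an exact set of linear
overestimators of cardinality `∏_{α ∈ supp} |α| ≤ d^m`, and the relaxed Lovász
extension one of cardinality at most `2^{n'}`; hence the concave-extension
complexity is at most `min (2^{n'}) (d^m)`. -/
theorem standard_extension_complexity {n : ℕ} (c : Finset (Fin n) → ℝ)
    (hc : ∀ A : Finset (Fin n), 0 ≤ c A)
    (hdeg : ∀ A : Finset (Fin n), c A ≠ 0 → 2 ≤ A.card) :
    let supp := Finset.univ.filter (fun A : Finset (Fin n) => c A ≠ 0)
    let m := supp.card
    let d := supp.sup Finset.card
    let n' := (supp.biUnion id).card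
    let Exact : Finset (Fin n → ℝ) → Prop := fun F =>
      (∀ ℓ ∈ F, ∀ S : Finset (Fin n), evalPoly c S ≤ ∑ j ∈ S, ℓ j) ∧
      (∀ S : Finset (Fin n), ∃ ℓ ∈ F, (∑ j ∈ S, ℓ j) = evalPoly c S)
    (∃ F : Finset (Fin n → ℝ), Exact F ∧ F.card ≤ ∏ A ∈ supp, A.card) ∧
    (∏ A ∈ supp, A.card ≤ d ^ m) ∧
    (∃ F : Finset (Fin n → ℝ), Exact F ∧ F.card ≤ 2 ^ n') := by
  classical
  intro supp m d n' Exact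
  have hne : ∀ A ∈ supp, A.Nonempty := by
    intro A hA
    have hA' : c A ≠ 0 := (Finset.mem_filter.mp hA).2
    have := hdeg A hA'
    exact Finset.card_pos.mp (by omega)
  set V := supp.biUnion id with hV
  have hAV : ∀ A ∈ supp, A ⊆ V := by
    intro A hA x hx
    exact Finset.mem_biUnion.mpr ⟨A, hA, hx⟩
  -- pick set
  let pset : Finset (Fin n) → Finset (Fin n) → Finset (Fin n) :=
    fun T A => if (A \ T).Nonempty then A \ T else A
  have pset_ne : ∀ T A, A.Nonempty → (pset T A).Nonempty := by
    intro T A hA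
    dsimp only [pset]
    split
    · assumption
    · exact hA
  have pset_sub : ∀ T A, pset T A ⊆ A := by
    intro T A
    dsimp only [pset]
    split
    · exact Finset.sdiff_subset
    · exact Finset.Subset.refl A
  have pset_not_sub : ∀ T A, ¬ A ⊆ T → pset T A = A \ T := by
    intro T A h
    obtain ⟨x, hxA, hxT⟩ := Finset.not_subset.mp h
    have : (A \ T).Nonempty := ⟨x, Finset.mem_sdiff.mpr ⟨hxA, hxT⟩⟩
    simp only [pset, if_pos this]
  -- selectors
  let ell : ((A : Finset (Fin n)) → A ∈ supp → Fin n) → (Fin n → ℝ) :=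
    fun σ j => ∑ x ∈ supp.attach, if σ x.1 x.2 = j then c x.1 else 0
  have key_sum : ∀ σ S, (∑ j ∈ S, ell σ j)
      = ∑ x ∈ supp.attach, if σ x.1 x.2 ∈ S then c x.1 else 0 := by
    intro σ S
    dsimp only [ell]
    rw [Finset.sum_comm]
    refine Finset.sum_congr rfl fun x _ => ?_
    exact Finset.sum_ite_eq S (σ x.1 x.2) (fun _ => c x.1)
  have heval : ∀ S, evalPoly c S = ∑ x ∈ supp.attach, if x.1 ⊆ S then c x.1 else 0 := by
    intro S
    rw [Finset.sum_attach supp (fun A => if A ⊆ S then c A else 0)]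
    rw [evalPoly]
    symm
    refine Finset.sum_subset (Finset.subset_univ supp) ?_
    intro A _ hA
    have : c A = 0 := by
      by_contra h
      exact hA (Finset.mem_filter.mpr ⟨Finset.mem_univ A, h⟩)
    simp [this]
  have hover : ∀ σ, (∀ A hA, σ A hA ∈ A) → ∀ S, evalPoly c S ≤ ∑ j ∈ S, ell σ j := by
    intro σ hσ S
    rw [heval, key_sum]
    refine Finset.sum_le_sum fun x _ => ?_
    by_cases h : x.1 ⊆ S
    · rw [if_pos h, if_pos (h (hσ x.1 x.2))]
    · rw [if_neg h]
      split
      · exact hc _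
      · exact le_refl 0
  -- the canonical selector for target set T
  let σT : Finset (Fin n) → (A : Finset (Fin n)) → A ∈ supp → Fin n :=
    fun T A hA => (pset T A).min' (pset_ne T A (hne A hA))
  have σT_mem : ∀ T A hA, σT T A hA ∈ A := by
    intro T A hA
    exact pset_sub T A (Finset.min'_mem _ _)
  have hex : ∀ S T, (∀ A ∈ supp, (A ⊆ T ↔ A ⊆ S)) → (∀ A ∈ supp, (A \ T) ∩ S = ∅) →
      (∑ j ∈ S, ell (σT T) j) = evalPoly c S := by
    intro S T hTS hdisj
    rw [heval, key_sum]
    refine Finset.sum_congr rfl fun x _ => ?_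
    by_cases h : x.1 ⊆ S
    · rw [if_pos h, if_pos]
      exact h (σT_mem T x.1 x.2)
    · rw [if_neg h, if_neg]
      intro hmem
      have hnT : ¬ x.1 ⊆ T := fun hT => h ((hTS x.1 x.2).mp hT)
      have hps : pset T x.1 = x.1 \ T := pset_not_sub T x.1 hnT
      have hmin : σT T x.1 x.2 ∈ x.1 \ T :=
        hps.le (Finset.min'_mem (pset T x.1) (pset_ne T x.1 (hne x.1 x.2)))
      have : σT T x.1 x.2 ∈ (x.1 \ T) ∩ S := Finset.mem_inter.mpr ⟨hmin, hmem⟩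
      rw [hdisj x.1 x.2] at this
      exact absurd this (Finset.notMem_empty _)
  refine ⟨?_, ?_, ?_⟩
  · -- standard extension
    refine ⟨(supp.pi fun A => A).image ell, ⟨?_, ?_⟩, ?_⟩
    · intro ℓ hℓ S
      obtain ⟨σ, hσ, rfl⟩ := Finset.mem_image.mp hℓ
      exact hover σ (fun A hA => (Finset.mem_pi.mp hσ) A hA) S
    · intro S
      refine ⟨ell (σT S), Finset.mem_image.mpr ⟨σT S, ?_, rfl⟩, ?_⟩
      · exact Finset.mem_pi.mpr fun A hA => σT_mem S A hA
      · refine hex S S (fun A _ => Iff.rfl) (fun A _ => ?_)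
        ext x
        simp only [Finset.mem_inter, Finset.mem_sdiff, Finset.notMem_empty, iff_false]
        tauto
    · calc ((supp.pi fun A => A).image ell).card ≤ (supp.pi fun A => A).card :=
            Finset.card_image_le
        _ = ∏ A ∈ supp, A.card := Finset.card_pi supp _
  · exact Finset.prod_le_pow_card supp _ d (fun A hA => Finset.le_sup hA)
  · -- relaxed Lovász extension
    refine ⟨V.powerset.image (fun T => ell (σT T)), ⟨?_, ?_⟩, ?_⟩
    · intro ℓ hℓ S
      obtain ⟨T, _, rfl⟩ := Finset.mem_image.mp hℓ
      exact hover (σT T) (σT_mem T) S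
    · intro S
      refine ⟨ell (σT (S ∩ V)), Finset.mem_image.mpr ⟨S ∩ V,
        Finset.mem_powerset.mpr Finset.inter_subset_right, rfl⟩, ?_⟩
      refine hex S (S ∩ V) (fun A hA => ?_) (fun A hA => ?_)
      · constructor
        · intro h x hx; exact (Finset.mem_inter.mp (h hx)).1
        · intro h x hx; exact Finset.mem_inter.mpr ⟨h hx, hAV A hA hx⟩
      · refine Finset.eq_empty_of_forall_notMem fun x hx => ?_
        have h1 := Finset.mem_inter.mp hx
        have h2 := Finset.mem_sdiff.mp h1.1
        exact h2.2 (Finset.mem_inter.mpr ⟨h1.2, hAV A hA h2.1⟩)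
    · calc (V.powerset.image (fun T => ell (σT T))).card ≤ V.powerset.card :=
            Finset.card_image_le
        _ = 2 ^ n' := by rw [Finset.card_powerset]
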